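/- arXiv:1310.8028 — 5 statements merged into one kernel-verified Lean document; each statement's English description precedes it below -/
import Mathlib

section
/- The partial order (Sc, ≤) is well-founded, where Sc is the set of monotone non-increasing functions α from {1,2,...,ω} to {0,1,...,ω} (with ω the first infinite ordinal/cardinal) that are not identically zero and satisfy α(ω) = lim_{n→ω} α(n), ordered pointwise: α ≤ β iff α(m) ≤ β(m) for all m. That is, there is no strictly decreasing infinite sequence in Sc. -/
/- `Sc` is the set of functions from `{1,2,...,ω}` to `{0,1,...,ω}` (here reindexed
order-isomorphically by `ℕ∞ = ℕ ∪ {⊤}`) that are weakly decreasing, not identically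
zero, and continuous at `ω` (the value at `⊤` is the infimum of the finite values),
ordered pointwise. -/
abbrev Sc : Type :=
  {α : ℕ∞ → ℕ∞ // Antitone α ∧ (∃ m, α m ≠ 0) ∧ α ⊤ = ⨅ n : ℕ, α (n : ℕ∞)}

open scoped Classical

/-- Every weakly decreasing sequence in `ℕ∞` is eventually constant. -/
private lemma estab (u : ℕ → ℕ∞) (h : ∀ k, u (k + 1) ≤ u k) :
    ∃ K, ∀ k, K ≤ k → u k = u K := by
  obtain ⟨a, ha, hmin⟩ := wellFounded_lt.has_min (Set.range u) ⟨u 0, 0, rfl⟩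
  obtain ⟨K, rfl⟩ := ha
  exact ⟨K, fun k hk =>
    le_antisymm (antitone_nat_of_succ_le h hk) (not_lt.1 fun hlt => hmin (u k) ⟨k, rfl⟩ hlt)⟩

/-- The "transpose" of `α` at level `i`: one plus the largest finite `n` with `α n ≥ i`
(`⊤` if there are unboundedly many such `n`, `0` if there are none). -/
noncomputable def gg (α : Sc) (i : ℕ) : ℕ∞ :=
  if hb : BddAbove {n : ℕ | (i : ℕ∞) ≤ α.1 n} then
    if hne : {n : ℕ | (i : ℕ∞) ≤ α.1 n}.Nonempty then
      ((sSup {n : ℕ | (i : ℕ∞) ≤ α.1 n} : ℕ) : ℕ∞) + 1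
    else 0
  else ⊤

lemma gg_spec (α : Sc) (i m : ℕ) : (i : ℕ∞) ≤ α.1 m ↔ (m : ℕ∞) < gg α i := by
  unfold gg
  split_ifs with hb hne
  · rw [ENat.lt_add_one_iff (by simp), Nat.cast_le]
    constructor
    · intro h
      exact le_csSup hb h
    · intro h
      exact le_trans (Nat.sSup_mem hne hb) (α.2.1 (Nat.cast_le.2 h))
  · constructor
    · intro h
      exact absurd ⟨m, h⟩ hne
    · intro h
      simp at h
  · rw [not_bddAbove_iff] at hb
    constructor
    · intro _
      exact ENat.coe_lt_top m
    · intro _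
      obtain ⟨n, hn, hmn⟩ := hb m
      exact le_trans hn (α.2.1 (Nat.cast_le.2 hmn.le))

lemma gg_top_spec (α : Sc) (i : ℕ) : (i : ℕ∞) ≤ α.1 ⊤ ↔ gg α i = ⊤ := by
  unfold gg
  split_ifs with hb hne
  · constructor
    · intro h
      exfalso
      obtain ⟨b, hbm⟩ := hb
      have hmem : b + 1 ∈ {n : ℕ | (i : ℕ∞) ≤ α.1 n} := h.trans (α.2.1 le_top)
      have := hbm hmem
      omega
    · intro h
      exact absurd h fun hc => ENat.coe_ne_top _ (by exact_mod_cast hc)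
  · constructor
    · intro h
      exact absurd (show (0 : ℕ) ∈ {n : ℕ | (i : ℕ∞) ≤ α.1 n} from h.trans (α.2.1 le_top)) fun hm => hne ⟨0, hm⟩
    · intro h
      simp at h
  · rw [not_bddAbove_iff] at hb
    constructor
    · intro _
      rfl
    · intro _
      rw [α.2.2.2]
      refine le_iInf fun n => ?_
      obtain ⟨n', hn', hlt⟩ := hb n
      exact le_trans hn' (α.2.1 (Nat.cast_le.2 hlt.le))

lemma gg_mono (α β : Sc) (h : α.1 ≤ β.1) (i : ℕ) : gg α i ≤ gg β i := by
  by_contra hc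
  push_neg at hc
  have hne := hc.ne_top
  lift gg β i to ℕ using hne with b hb
  have h2 : (i : ℕ∞) ≤ β.1 b := le_trans ((gg_spec α i b).2 hc) (h b)
  have h3 := (gg_spec β i b).1 h2
  rw [hb] at h3
  exact lt_irrefl _ h3

lemma no_descent (f : ℕ → Sc) (hf : ∀ k, f (k + 1) < f k) (n₀ V : ℕ)
    (h0 : (f 0).1 (n₀ : ℕ∞) = (V : ℕ∞)) : False := by
  have hle : ∀ k, (f (k + 1)).1 ≤ (f k).1 := fun k => Subtype.coe_le_coe.2 (hf k).le
  have hmono : Antitone fun k => (f k).1 :=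
    antitone_nat_of_succ_le fun k => hle k
  choose Φ hΦ using fun m : ℕ∞ => estab (fun k => (f k).1 m) (fun k => hle k m)
  choose Ψ hΨ using fun i : ℕ => estab (fun k => gg (f k) i)
    (fun k => gg_mono _ _ (hle k) i)
  set K := max ((Finset.range (n₀ + 1)).sup fun m => Φ (m : ℕ∞))
    ((Finset.range (V + 1)).sup Ψ) with hKdef
  have hcoordK : ∀ m : ℕ, m ≤ n₀ → (f (K + 1)).1 m = (f K).1 m := by
    intro m hm
    have hΦm : Φ (m : ℕ∞) ≤ K :=
      le_trans (Finset.le_sup (f := fun m : ℕ => Φ (m : ℕ∞))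
        (Finset.mem_range.2 (Nat.lt_succ_of_le hm))) (le_max_left _ _)
    rw [hΦ (m : ℕ∞) (K + 1) (hΦm.trans (Nat.le_succ K)), hΦ (m : ℕ∞) K hΦm]
  have hgK : ∀ i : ℕ, i ≤ V → gg (f (K + 1)) i = gg (f K) i := by
    intro i hi
    have hΨi : Ψ i ≤ K :=
      le_trans (Finset.le_sup (Finset.mem_range.2 (Nat.lt_succ_of_le hi))) (le_max_right _ _)
    rw [hΨ i (K + 1) (hΨi.trans (Nat.le_succ K)), hΨ i K hΨi]
  have hboundK : (f K).1 (n₀ : ℕ∞) ≤ (V : ℕ∞) := by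
    rw [← h0]
    exact hmono (Nat.zero_le K) (n₀ : ℕ∞)
  have key : ∀ m : ℕ∞, (f (K + 1)).1 m = (f K).1 m := by
    intro m
    induction m using ENat.recTopCoe with
    | top =>
      refine le_antisymm (hle K ⊤) (not_lt.1 fun hlt => ?_)
      have h1 : (f K).1 ⊤ ≤ (V : ℕ∞) := ((f K).2.1 le_top).trans hboundK
      have hne := (h1.trans_lt (ENat.coe_lt_top V)).ne
      lift (f K).1 ⊤ to ℕ using hne with i hi
      have hiV : i ≤ V := Nat.cast_le.1 h1
      have hA : gg (f K) i = ⊤ := (gg_top_spec _ i).1 (le_of_eq hi)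
      have hB : gg (f (K + 1)) i ≠ ⊤ := by
        intro hc
        exact absurd ((gg_top_spec _ i).2 hc) (not_le.2 hlt)
      rw [hgK i hiV] at hB
      exact hB hA
    | coe m =>
      rcases le_or_gt m n₀ with hm | hm
      · exact hcoordK m hm
      · refine le_antisymm (hle K m) (not_lt.1 fun hlt => ?_)
        have h1 : (f K).1 m ≤ (V : ℕ∞) := ((f K).2.1 (Nat.cast_le.2 hm.le)).trans hboundK
        have hne := (h1.trans_lt (ENat.coe_lt_top V)).ne
        lift (f K).1 (m : ℕ∞) to ℕ using hne with i hi
        have hiV : i ≤ V := Nat.cast_le.1 h1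
        have hA : (m : ℕ∞) < gg (f K) i := (gg_spec _ i m).1 (le_of_eq hi)
        have hB : ¬ (m : ℕ∞) < gg (f (K + 1)) i := by
          intro hc
          exact absurd ((gg_spec _ i m).2 hc) (not_le.2 hlt)
        rw [hgK i hiV] at hB
        exact hB hA
  have heq : f (K + 1) = f K := Subtype.ext (funext key)
  exact absurd (hf K) (heq ▸ lt_irrefl (f K))

/-- The partial order `(Sc, ≤)` is well-founded: there is no strictly decreasing
infinite sequence in `Sc`. -/
theorem stmt0 : WellFounded ((· < ·) : Sc → Sc → Prop) := by
  rw [RelEmbedding.wellFounded_iff_isEmpty]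
  constructor
  intro e
  set f : ℕ → Sc := ⇑e with hfdef
  have hdesc : ∀ k, f (k + 1) < f k := fun k => e.map_rel_iff.2 (Nat.lt_succ_self k)
  by_cases H : ∀ (k : ℕ) (n : ℕ), (f k).1 (n : ℕ∞) = ⊤
  · have heq : f 1 = f 0 := by
      refine Subtype.ext (funext fun m => ?_)
      induction m using ENat.recTopCoe with
      | top => rw [(f 1).2.2.2, (f 0).2.2.2]; simp [H]
      | coe n => rw [H 1 n, H 0 n]
    exact absurd (hdesc 0) (heq ▸ lt_irrefl (f 0))
  · push_neg at H
    obtain ⟨k₀, n₀, hk₀⟩ := H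
    lift (f k₀).1 (n₀ : ℕ∞) to ℕ using hk₀ with V hV
    exact no_descent (fun k => f (k₀ + k)) (fun k => hdesc (k₀ + k)) n₀ V hV.symm
end

section
/- The partial order (Sc, ≤) has no infinite antichains: any infinite subset of Sc contains two distinct comparable elements. -/
/-- From a `SublistForall₂` relation we can find, for each index of the first list,
a later-or-equal index of the second list with related entries. -/
lemma sublistForall₂_get {α : Type*} {r : α → α → Prop} {l₁ l₂ : List α}
    (h : List.SublistForall₂ r l₁ l₂) :
    ∀ i (hi : i < l₁.length), ∃ j, ∃ hj : j < l₂.length, i ≤ j ∧ r (l₁[i]'hi) (l₂[j]'hj) := by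
  induction h with
  | nil => intro i hi; simp at hi
  | cons hab hl ih =>
    intro i hi
    cases i with
    | zero => exact ⟨0, by simp, le_refl 0, hab⟩
    | succ k =>
      obtain ⟨j, hj, hkj, hr⟩ := ih k (by simpa using hi)
      exact ⟨j + 1, by simpa using hj, by omega, hr⟩
  | cons_right hl ih =>
    intro i hi
    obtain ⟨j, hj, hij, hr⟩ := ih i hi
    exact ⟨j + 1, by simpa using hj, by omega, hr⟩

/-- `(Sc, ≤)` has no infinite antichains: any infinite subset of `Sc` contains two
distinct comparable elements. -/
theorem stmt1 (S : Set Sc) (hS : S.Infinite) :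
    ∃ a ∈ S, ∃ b ∈ S, a ≠ b ∧ (a ≤ b ∨ b ≤ a) := by
  classical
  have hwf : WellFounded ((· < ·) : ℕ∞ → ℕ∞ → Prop) := wellFounded_lt
  -- the restriction of `α` to `ℕ`
  set g : Sc → ℕ → ℕ∞ := fun α n => α.1 n with hg
  have hganti : ∀ α : Sc, Antitone (g α) := by
    intro α m n h
    exact α.2.1 (by exact_mod_cast h)
  -- an index where `g α` attains its minimum
  set N : Sc → ℕ := fun α => Function.argmin (g α) with hNdef
  have hN : ∀ (α : Sc) (n : ℕ), g α (N α) ≤ g α n := fun α n =>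
    Function.argmin_le (g α) n
  -- encode `α` as a finite word over `ℕ∞ × ℕ∞`
  set v : Sc → List (ℕ∞ × ℕ∞) :=
    fun α => (List.range (N α + 1)).map (fun n => (g α n, g α (N α))) with hv
  have hvlen : ∀ α : Sc, (v α).length = N α + 1 := by intro α; simp [hv]
  have hvget : ∀ (α : Sc) (i : ℕ) (hi : i < (v α).length),
      (v α)[i]'hi = (g α i, g α (N α)) := by
    intro α i hi
    simp [hv]
  -- Dickson + Higman
  have h1 : (Set.univ : Set ℕ∞).IsPWO := (Set.isWF_univ_iff.mpr ⟨hwf⟩).isPWO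
  have hpwo : (Set.univ : Set (ℕ∞ × ℕ∞)).IsPWO := by
    have := h1.prod h1
    rwa [Set.univ_prod_univ] at this
  have hh := Set.PartiallyWellOrderedOn.partiallyWellOrderedOn_sublistForall₂
    ((· ≤ ·) : ℕ∞ × ℕ∞ → ℕ∞ × ℕ∞ → Prop) hpwo
  -- pick an injective sequence in `S` and apply Higman's lemma
  let f := hS.natEmbedding
  obtain ⟨m, n, hmn, hr⟩ := hh.exists_lt (f := fun k => v (f k).1) (by intro k; simp)
  set a : Sc := (f m).1 with ha
  set b : Sc := (f n).1 with hb
  -- the limits are comparable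
  have hL : g a (N a) ≤ g b (N b) := by
    obtain ⟨j, hj, -, hr0⟩ := sublistForall₂_get hr 0 (by rw [hvlen]; omega)
    rw [hvget, hvget] at hr0
    exact hr0.2
  -- pointwise comparison on ℕ
  have hpt : ∀ k : ℕ, g a k ≤ g b k := by
    intro k
    by_cases hk : k ≤ N a
    · obtain ⟨j, hj, hkj, hr0⟩ := sublistForall₂_get hr k (by rw [hvlen]; omega)
      rw [hvget, hvget] at hr0
      exact hr0.1.trans (hganti b hkj)
    · exact ((hganti a (by omega : N a ≤ k)).trans hL).trans (hN b k)
  have hle : a ≤ b := by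
    intro x
    induction x using ENat.recTopCoe with
    | top =>
      rw [show a.1 ⊤ = ⨅ i : ℕ, a.1 (i : ℕ∞) from a.2.2.2,
        show b.1 ⊤ = ⨅ i : ℕ, b.1 (i : ℕ∞) from b.2.2.2]
      exact iInf_mono fun i => hpt i
    | coe k => exact hpt k
  have hne : a ≠ b := by
    intro h
    exact absurd (f.injective (Subtype.ext h)) (by omega)
  exact ⟨a, (f m).2, b, (f n).2, hne, Or.inl hle⟩
end

section
/- Let E ⊆ F be smooth countable Borel equivalence relations on standard Borel spaces X, and E' ⊆ F' on Y, and suppose both E and E' admit Borel transversals and the quotients X/E, Y/E' are standard Borel. If there is an injective Borel reduction from F/E to F'/E' (as equivalence relations on the quotient spaces X/E, Y/E'), then there is a (simultaneous) Borel reduction f : X → Y from E to E' and from F to F'. -/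
universe u

/-- An equivalence relation on a standard Borel space is *smooth* if there is a Borel
reduction from it to equality on some standard Borel space. -/
def IsSmoothEqvRel {X : Type u} [MeasurableSpace X] (E : Setoid X) : Prop :=
  ∃ (Z : Type u) (mZ : MeasurableSpace Z), @StandardBorelSpace Z mZ ∧
    ∃ f : X → Z, @Measurable _ _ _ mZ f ∧ ∀ x y, E.r x y ↔ f x = f y

/-- Let `E ⊆ F` and `E' ⊆ F'` be smooth countable Borel equivalence relations on
standard Borel spaces `X`, `Y`, where `E`, `E'` admit Borel transversals and the
quotients `X/E`, `Y/E'` (with the quotient Borel structure) are standard Borel.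
If there is an injective Borel reduction `g` from `F/E` to `F'/E'`, then there is a
simultaneous Borel reduction `f : X → Y` from `E` to `E'` and from `F` to `F'`. -/
theorem stmt14 {X Y : Type u} [MeasurableSpace X] [StandardBorelSpace X]
    [MeasurableSpace Y] [StandardBorelSpace Y]
    (E F : Setoid X) (E' F' : Setoid Y)
    (hEF : ∀ x y, E.r x y → F.r x y) (hEF' : ∀ x y, E'.r x y → F'.r x y)
    (hEb : MeasurableSet {p : X × X | E.r p.1 p.2})
    (hFb : MeasurableSet {p : X × X | F.r p.1 p.2})
    (hE'b : MeasurableSet {p : Y × Y | E'.r p.1 p.2})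
    (hF'b : MeasurableSet {p : Y × Y | F'.r p.1 p.2})
    (hEc : ∀ x, {y | E.r x y}.Countable) (hFc : ∀ x, {y | F.r x y}.Countable)
    (hE'c : ∀ y, {z | E'.r y z}.Countable) (hF'c : ∀ y, {z | F'.r y z}.Countable)
    (hEs : IsSmoothEqvRel E) (hFs : IsSmoothEqvRel F) (hE's : IsSmoothEqvRel E') (hF's : IsSmoothEqvRel F')
    (hTE : ∃ T : Set X, MeasurableSet T ∧ ∀ x, ∃! t, t ∈ T ∧ E.r t x)
    (hTE' : ∃ T : Set Y, MeasurableSet T ∧ ∀ y, ∃! t, t ∈ T ∧ E'.r t y)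
    (hQE : StandardBorelSpace (Quotient E)) (hQE' : StandardBorelSpace (Quotient E'))
    (g : Quotient E → Quotient E') (hg : Measurable g) (hginj : Function.Injective g)
    (hgred : ∀ x y, F.r x y ↔ ∃ x' y', Quotient.mk E' x' = g (Quotient.mk E x) ∧
        Quotient.mk E' y' = g (Quotient.mk E y) ∧ F'.r x' y') :
    ∃ f : X → Y, Measurable f ∧ (∀ x y, E.r x y ↔ E'.r (f x) (f y)) ∧
      (∀ x y, F.r x y ↔ F'.r (f x) (f y)) := by
  classical
  haveI := hQE'
  obtain ⟨T, hTm, hT⟩ := hTE'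
  haveI : StandardBorelSpace T := hTm.standardBorel
  set m : T → Quotient E' := fun t => Quotient.mk E' t.1 with hm
  have hmmeas : Measurable m := by
    have : Measurable (Quotient.mk E' : Y → Quotient E') := @measurable_quotient_mk' Y _ E'
    exact this.comp measurable_subtype_coe
  have hminj : Function.Injective m := by
    rintro ⟨a, ha⟩ ⟨b, hb⟩ hab
    have hr : E'.r a b := Quotient.exact hab
    obtain ⟨u, _, hu⟩ := hT b
    have h1 : (⟨a, ha⟩ : T).1 = u := hu a ⟨ha, hr⟩
    have h2 : (⟨b, hb⟩ : T).1 = u := hu b ⟨hb, E'.refl b⟩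
    exact Subtype.ext (h1.trans h2.symm)
  have hmsurj : Function.Surjective m := by
    intro q
    induction q using Quotient.ind with
    | _ y =>
      obtain ⟨t, ⟨ht, hr⟩, _⟩ := hT y
      exact ⟨⟨t, ht⟩, Quotient.sound hr⟩
  have hemb : MeasurableEmbedding m := hmmeas.measurableEmbedding hminj
  let e := Equiv.ofBijective m ⟨hminj, hmsurj⟩
  have hesymm : Measurable e.symm := by
    intro A hA
    have h1 : e.symm ⁻¹' A = m '' A := by
      ext q
      simp only [Set.mem_preimage, Set.mem_image]
      constructor
      · intro h
        exact ⟨e.symm q, h, e.apply_symm_apply q⟩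
      · rintro ⟨a, haA, rfl⟩
        exact (congrArg (· ∈ A) (e.symm_apply_apply a)).mpr haA
    rw [h1]
    exact hemb.measurableSet_image.2 hA
  set f : X → Y := fun x => (e.symm (g (Quotient.mk E x)) : Y) with hf
  have hfmeas : Measurable f := by
    have h0 : Measurable (Quotient.mk E : X → Quotient E) := @measurable_quotient_mk' X _ E
    exact measurable_subtype_coe.comp (hesymm.comp (hg.comp h0))
  have key : ∀ x, Quotient.mk E' (f x) = g (Quotient.mk E x) := fun x =>
    e.apply_symm_apply (g (Quotient.mk E x))
  refine ⟨f, hfmeas, ?_, ?_⟩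
  · intro x y
    constructor
    · intro h
      have : Quotient.mk E x = Quotient.mk E y := Quotient.sound h
      simp only [hf, this]
      exact E'.refl _
    · intro h
      have h1 : Quotient.mk E' (f x) = Quotient.mk E' (f y) := Quotient.sound h
      rw [key, key] at h1
      exact Quotient.exact (hginj h1)
  · intro x y
    rw [hgred]
    constructor
    · rintro ⟨x', y', hx', hy', hr⟩
      have hx2 : E'.r (f x) x' := Quotient.exact ((key x).trans hx'.symm)
      have hy2 : E'.r y' (f y) := Quotient.exact (hy'.trans (key y).symm)
      exact F'.trans (F'.trans (hEF' _ _ hx2) hr) (hEF' _ _ hy2)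
    · intro h
      exact ⟨f x, f y, key x, key y, h⟩
end

section
/- Let X, Y be standard Borel spaces, f, g : X → Y Borel functions, and suppose there exist Borel parametrizations of the induced equivalence relations Eq(f) and Eq(g) (where x Eq(f) y ↔ f(x) = f(y)). If f and g are equivalent (there is an arbitrary bijection φ : X → X with f = g ∘ φ), then they are Borel equivalent (there is a Borel bijection φ : X → X with f = g ∘ φ). -/
section SigmaAux

variable {ι : Type*} {E : ι → Type*} [mE : ∀ i, MeasurableSpace (E i)]

theorem measurable_sigma_mk' (i : ι) : Measurable (@Sigma.mk ι E i) :=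
  measurable_iff_le_map.2 (iInf_le _ i)

theorem measurable_of_sigma {γ : Type*} [MeasurableSpace γ] {f : (Σ i, E i) → γ}
    (h : ∀ i, Measurable (fun e => f ⟨i, e⟩)) : Measurable f := by
  rw [measurable_iff_comap_le]
  refine le_iInf fun i => ?_
  rw [← MeasurableSpace.comap_le_iff_le_map, MeasurableSpace.comap_comp]
  exact measurable_iff_comap_le.1 (h i)

theorem measurableSet_sigma_of {s : Set (Σ i, E i)} (h : ∀ i, MeasurableSet (Sigma.mk i ⁻¹' s)) :
    MeasurableSet s :=
  MeasurableSpace.measurableSet_iInf.2 fun i => h i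

theorem measurableSet_sigma_mk_image (i : ι) {s : Set (E i)} (hs : MeasurableSet s) :
    MeasurableSet (Sigma.mk i '' s) := by
  apply measurableSet_sigma_of
  intro j
  rcases eq_or_ne j i with rfl | hj
  · have : Sigma.mk j ⁻¹' (Sigma.mk j '' s) = s := Set.preimage_image_eq s sigma_mk_injective
    rwa [this]
  · have : Sigma.mk j ⁻¹' (Sigma.mk i '' s) = ∅ := by
      ext e
      simp only [Set.mem_preimage, Set.mem_image, Set.mem_empty_iff_false, iff_false]
      rintro ⟨a, -, hae⟩
      exact hj (congrArg Sigma.fst hae).symm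
    rw [this]
    exact MeasurableSet.empty

instance sigma_countablySeparated [Countable ι]
    [h : ∀ i, MeasurableSpace.CountablySeparated (E i)] :
    MeasurableSpace.CountablySeparated (Σ i, E i) := by
  constructor; constructor
  have hS := fun i => ((h i).countably_separated).exists_countable_separating
  choose S hScnt hSmeas hSsep using hS
  refine ⟨(⋃ i, (fun s => Sigma.mk i '' s) '' (S i)) ∪ Set.range (fun i => Set.range (Sigma.mk i)),
    ?_, ?_, ?_⟩
  · exact ((Set.countable_iUnion fun i => (hScnt i).image _).union (Set.countable_range _))
  · rintro t (ht | ⟨i, rfl⟩)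
    · simp only [Set.mem_iUnion, Set.mem_image] at ht
      obtain ⟨i, s, hs, rfl⟩ := ht
      exact measurableSet_sigma_mk_image i (hSmeas i s hs)
    · have : Set.range (Sigma.mk i : E i → Σ i, E i) = Sigma.mk i '' Set.univ :=
        Set.image_univ.symm
      simp only []
      rw [this]
      exact measurableSet_sigma_mk_image i MeasurableSet.univ
  · rintro ⟨i, a⟩ - ⟨j, b⟩ - hagree
    have hij : i = j := by
      have h1 := (hagree (Set.range (Sigma.mk i)) (Or.inr ⟨i, rfl⟩)).1 ⟨a, rfl⟩
      obtain ⟨b', hb'⟩ := h1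
      exact congrArg Sigma.fst hb'
    subst hij
    have hab : a = b := by
      refine hSsep i a trivial b trivial fun s hs => ?_
      have := hagree (Sigma.mk i '' s) (Or.inl (Set.mem_iUnion.2 ⟨i, Set.mem_image_of_mem _ hs⟩))
      constructor
      · intro ha
        obtain ⟨b', hb's, hb'⟩ := this.1 ⟨a, ha, rfl⟩
        rwa [← (sigma_mk_injective hb' : b' = b)]
      · intro hb
        obtain ⟨a', ha's, ha'⟩ := this.2 ⟨b, hb, rfl⟩
        rwa [← (sigma_mk_injective ha' : a' = a)]
    subst hab
    rfl

end SigmaAux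

/-- `C⁺ = {1, 2, ..., ℵ₀, 2^ℵ₀}`, the possible cardinalities of nonempty Borel sets. -/
def Cplus : Set Cardinal :=
  {m | m ≠ 0 ∧ (m ≤ Cardinal.aleph0 ∨ m = Cardinal.continuum)}

instance : Countable Cplus := by
  have hsub : Cplus ⊆ insert Cardinal.continuum
      (insert Cardinal.aleph0 (Set.range fun n : ℕ => (n : Cardinal))) := by
    rintro m ⟨h0, h | rfl⟩
    · rcases h.lt_or_eq with h | rfl
      · obtain ⟨n, rfl⟩ := Cardinal.lt_aleph0.1 h
        exact Or.inr (Or.inr ⟨n, rfl⟩)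
      · exact Or.inr (Or.inl rfl)
    · exact Or.inl rfl
  exact (((Set.countable_range _).insert _).insert _).mono hsub |>.to_subtype

/-- The natural (sigma/product) measurable structure on `Σ m, Z m × W m`. -/
def sigmaProdMS (Z W : Cplus → Type) (mZ : ∀ m, MeasurableSpace (Z m))
    (mW : ∀ m, MeasurableSpace (W m)) : MeasurableSpace (Σ m : Cplus, Z m × W m) :=
  letI : ∀ m, MeasurableSpace (Z m) := mZ
  letI : ∀ m, MeasurableSpace (W m) := mW
  inferInstance

/-- A Borel parametrization of an equivalence relation `E` on a standard Borel space
`X`: a Borel bijection `φ : X → ⊔_{m ∈ C⁺} (Z m × Y m)`, where the `Z m` are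
(pairwise disjoint) standard Borel spaces, the `Y m` are standard Borel spaces with
`|Y m| = m`, and `x E y` iff `φ x` and `φ y` have the same first coordinate (in the
`Z` factor). -/
structure BorelParametrization {X : Type} [MeasurableSpace X] (E : Setoid X) where
  Z : Cplus → Type
  W : Cplus → Type
  mZ : ∀ m, MeasurableSpace (Z m)
  mW : ∀ m, MeasurableSpace (W m)
  sbZ : ∀ m, @StandardBorelSpace (Z m) (mZ m)
  sbW : ∀ m, @StandardBorelSpace (W m) (mW m)
  cardW : ∀ m : Cplus, Cardinal.mk (W m) = (m : Cardinal)
  param : X → Σ m : Cplus, Z m × W m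
  bij : Function.Bijective param
  meas : @Measurable X _ _ (sigmaProdMS Z W mZ mW) param
  eqv : ∀ x y, E.r x y ↔
    (⟨(param x).1, (param x).2.1⟩ : Σ m : Cplus, Z m) = ⟨(param y).1, (param y).2.1⟩

/-- If `f, g : X → Y` are Borel functions between standard Borel spaces whose induced
equivalence relations `Eq(f)`, `Eq(g)` are Borel parametrized, and if `f` and `g` are
equivalent (via an arbitrary bijection `φ` of `X` with `f = g ∘ φ`), then they are
Borel equivalent (via a Borel bijection). -/
theorem stmt16 {X Y : Type} [MeasurableSpace X] [StandardBorelSpace X]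
    [MeasurableSpace Y] [StandardBorelSpace Y]
    (f g : X → Y) (hf : Measurable f) (hg : Measurable g)
    (hpf : Nonempty (BorelParametrization (Setoid.ker f)))
    (hpg : Nonempty (BorelParametrization (Setoid.ker g)))
    (heqv : ∃ φ : X → X, Function.Bijective φ ∧ f = g ∘ φ) :
    ∃ φ : X → X, Function.Bijective φ ∧ Measurable φ ∧ f = g ∘ φ := by
  classical
  obtain ⟨P⟩ := hpf
  obtain ⟨Q⟩ := hpg
  obtain ⟨φ, φbij, hφ⟩ := heqv
  letI : ∀ m, MeasurableSpace (P.Z m) := P.mZ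
  letI : ∀ m, MeasurableSpace (P.W m) := P.mW
  letI : ∀ m, MeasurableSpace (Q.Z m) := Q.mZ
  letI : ∀ m, MeasurableSpace (Q.W m) := Q.mW
  haveI : ∀ m, StandardBorelSpace (P.Z m) := P.sbZ
  haveI : ∀ m, StandardBorelSpace (P.W m) := P.sbW
  haveI : ∀ m, StandardBorelSpace (Q.Z m) := Q.sbZ
  haveI : ∀ m, StandardBorelSpace (Q.W m) := Q.sbW
  have pmeas : Measurable P.param := P.meas
  have qmeas : Measurable Q.param := Q.meas
  have key_f : ∀ x y : X, f x = f y ↔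
      (⟨(P.param x).1, (P.param x).2.1⟩ : Σ m : Cplus, P.Z m)
        = ⟨(P.param y).1, (P.param y).2.1⟩ :=
    fun x y => ⟨fun h => (P.eqv x y).1 h, fun h => (P.eqv x y).2 h⟩
  have key_g : ∀ x y : X, g x = g y ↔
      (⟨(Q.param x).1, (Q.param x).2.1⟩ : Σ m : Cplus, Q.Z m)
        = ⟨(Q.param y).1, (Q.param y).2.1⟩ :=
    fun x y => ⟨fun h => (Q.eqv x y).1 h, fun h => (Q.eqv x y).2 h⟩
  have hPW : ∀ m : Cplus, Nonempty (P.W m) := fun m =>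
    Cardinal.mk_ne_zero_iff.1 (by rw [P.cardW m]; exact m.2.1)
  have hQW : ∀ m : Cplus, Nonempty (Q.W m) := fun m =>
    Cardinal.mk_ne_zero_iff.1 (by rw [Q.cardW m]; exact m.2.1)
  let pe : X ≃ (Σ m : Cplus, P.Z m × P.W m) := Equiv.ofBijective P.param P.bij
  let qe : X ≃ (Σ m : Cplus, Q.Z m × Q.W m) := Equiv.ofBijective Q.param Q.bij
  have pf_emb : MeasurableEmbedding P.param := pmeas.measurableEmbedding P.bij.1
  have qf_emb : MeasurableEmbedding Q.param := qmeas.measurableEmbedding Q.bij.1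
  have pe_symm_meas : Measurable pe.symm := fun s hs => by
    rw [← Equiv.image_eq_preimage_symm]
    exact pf_emb.measurableSet_image.2 hs
  have qe_symm_meas : Measurable qe.symm := fun s hs => by
    rw [← Equiv.image_eq_preimage_symm]
    exact qf_emb.measurableSet_image.2 hs
  have pe_left : ∀ q, P.param (pe.symm q) = q := fun q => pe.apply_symm_apply q
  have qe_left : ∀ q, Q.param (qe.symm q) = q := fun q => qe.apply_symm_apply q
  -- cardinality of fibers
  have card_f : ∀ x : X, Cardinal.mk {x' : X // f x' = f x} = ((P.param x).1 : Cardinal) := by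
    intro x
    rw [← P.cardW (P.param x).1]
    have hj : ∀ w : P.W (P.param x).1,
        f (pe.symm ⟨(P.param x).1, ((P.param x).2.1, w)⟩) = f x := by
      intro w
      refine (key_f _ _).2 ?_
      rw [pe_left]
    refine (Cardinal.mk_congr (Equiv.ofBijective
      (fun w : P.W (P.param x).1 =>
        (⟨pe.symm ⟨(P.param x).1, ((P.param x).2.1, w)⟩, hj w⟩ : {x' : X // f x' = f x}))
      ⟨?_, ?_⟩)).symm
    · intro w w' hww'
      have h1 : pe.symm ⟨(P.param x).1, ((P.param x).2.1, w)⟩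
          = pe.symm ⟨(P.param x).1, ((P.param x).2.1, w')⟩ := congrArg Subtype.val hww'
      have h2 := pe.symm.injective h1
      obtain ⟨-, h3⟩ := Sigma.mk.inj_iff.1 h2
      exact (Prod.ext_iff.1 (eq_of_heq h3)).2
    · rintro ⟨x', hx'⟩
      have h := (key_f x' x).1 hx'
      rcases hq : P.param x' with ⟨m', z', w'⟩
      rw [hq] at h
      obtain ⟨hm, hz⟩ := Sigma.mk.inj_iff.1 h
      subst hm
      have hz' := eq_of_heq hz
      subst hz'
      refine ⟨w', Subtype.ext ?_⟩
      rw [Equiv.symm_apply_eq]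
      exact hq.symm
  have card_g : ∀ x : X, Cardinal.mk {x' : X // g x' = g x} = ((Q.param x).1 : Cardinal) := by
    intro x
    rw [← Q.cardW (Q.param x).1]
    have hj : ∀ w : Q.W (Q.param x).1,
        g (qe.symm ⟨(Q.param x).1, ((Q.param x).2.1, w)⟩) = g x := by
      intro w
      refine (key_g _ _).2 ?_
      rw [qe_left]
    refine (Cardinal.mk_congr (Equiv.ofBijective
      (fun w : Q.W (Q.param x).1 =>
        (⟨qe.symm ⟨(Q.param x).1, ((Q.param x).2.1, w)⟩, hj w⟩ : {x' : X // g x' = g x}))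
      ⟨?_, ?_⟩)).symm
    · intro w w' hww'
      have h1 : qe.symm ⟨(Q.param x).1, ((Q.param x).2.1, w)⟩
          = qe.symm ⟨(Q.param x).1, ((Q.param x).2.1, w')⟩ := congrArg Subtype.val hww'
      have h2 := qe.symm.injective h1
      obtain ⟨-, h3⟩ := Sigma.mk.inj_iff.1 h2
      exact (Prod.ext_iff.1 (eq_of_heq h3)).2
    · rintro ⟨x', hx'⟩
      have h := (key_g x' x).1 hx'
      rcases hq : Q.param x' with ⟨m', z', w'⟩
      rw [hq] at h
      obtain ⟨hm, hz⟩ := Sigma.mk.inj_iff.1 h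
      subst hm
      have hz' := eq_of_heq hz
      subst hz'
      refine ⟨w', Subtype.ext ?_⟩
      rw [Equiv.symm_apply_eq]
      exact hq.symm
  -- equal indices for equal values
  have card_eq : ∀ x x' : X, f x = g x' → (P.param x).1 = (Q.param x').1 := by
    intro x x' hxx'
    have hfib : Cardinal.mk {x'' : X // f x'' = f x} = Cardinal.mk {x'' : X // g x'' = g x'} := by
      refine Cardinal.mk_congr (Equiv.ofBijective
        (fun t => ⟨φ t.1, by
          rw [show g (φ t.1) = f t.1 from (congrFun hφ t.1).symm, t.2, hxx']⟩) ⟨?_, ?_⟩)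
      · intro t t' htt'
        exact Subtype.ext (φbij.1 (congrArg Subtype.val htt'))
      · rintro ⟨s, hs⟩
        obtain ⟨t, rfl⟩ := φbij.2 s
        refine ⟨⟨t, ?_⟩, rfl⟩
        rw [congrFun hφ t, hxx']
        exact hs
    exact Subtype.ext ((card_f x).symm.trans (hfib.trans (card_g x')))
  -- the section maps and value maps
  let eF : ∀ m : Cplus, P.Z m → X := fun m z => pe.symm ⟨m, (z, (hPW m).some)⟩
  let eG : ∀ m : Cplus, Q.Z m → X := fun m z => qe.symm ⟨m, (z, (hQW m).some)⟩
  have paramF : ∀ m z, P.param (eF m z) = ⟨m, (z, (hPW m).some)⟩ := fun m z => pe_left _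
  have paramG : ∀ m z, Q.param (eG m z) = ⟨m, (z, (hQW m).some)⟩ := fun m z => qe_left _
  let F : ∀ m : Cplus, P.Z m → Y := fun m z => f (eF m z)
  let G : ∀ m : Cplus, Q.Z m → Y := fun m z => g (eG m z)
  have fF : ∀ x : X, f x = F (P.param x).1 (P.param x).2.1 := by
    intro x
    refine (key_f x _).2 ?_
    rw [paramF]
  have gG : ∀ x : X, g x = G (Q.param x).1 (Q.param x).2.1 := by
    intro x
    refine (key_g x _).2 ?_
    rw [paramG]
  have Finj : ∀ m : Cplus, Function.Injective (F m) := by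
    intro m z z' h
    have h2 := (key_f _ _).1 h
    rw [paramF, paramF] at h2
    obtain ⟨-, h3⟩ := Sigma.mk.inj_iff.1 h2
    exact eq_of_heq h3
  have Ginj : ∀ m : Cplus, Function.Injective (G m) := by
    intro m z z' h
    have h2 := (key_g _ _).1 h
    rw [paramG, paramG] at h2
    obtain ⟨-, h3⟩ := Sigma.mk.inj_iff.1 h2
    exact eq_of_heq h3
  have eFmeas : ∀ m : Cplus, Measurable (eF m) := fun m =>
    pe_symm_meas.comp ((measurable_sigma_mk' m).comp (measurable_id.prodMk measurable_const))
  have eGmeas : ∀ m : Cplus, Measurable (eG m) := fun m =>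
    qe_symm_meas.comp ((measurable_sigma_mk' m).comp (measurable_id.prodMk measurable_const))
  have Gemb : ∀ m : Cplus, MeasurableEmbedding (G m) := fun m =>
    (hg.comp (eGmeas m)).measurableEmbedding (Ginj m)
  -- construction of θ
  have exθ : ∀ (m : Cplus) (z : P.Z m), ∃ z' : Q.Z m, G m z' = F m z := by
    intro m z
    have h1 : F m z = g (φ (eF m z)) := congrFun hφ (eF m z)
    have hidx := card_eq (eF m z) (φ (eF m z)) h1
    rw [paramF] at hidx
    rcases hq : Q.param (φ (eF m z)) with ⟨m₁, z₁, w₁⟩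
    rw [hq] at hidx
    have hm : m = m₁ := hidx
    subst hm
    refine ⟨z₁, ?_⟩
    have h2 : g (eG m z₁) = g (φ (eF m z)) := by
      refine (key_g _ _).2 ?_
      rw [paramG, hq]
    exact h2.trans h1.symm
  let θ : ∀ m : Cplus, P.Z m → Q.Z m := fun m z => (exθ m z).choose
  have θspec : ∀ m z, G m (θ m z) = F m z := fun m z => (exθ m z).choose_spec
  have θinj : ∀ m : Cplus, Function.Injective (θ m) := by
    intro m z z' h
    apply Finj m
    rw [← θspec, ← θspec, h]
  have θsurj : ∀ m : Cplus, Function.Surjective (θ m) := by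
    intro m z'
    obtain ⟨x₀, hx₀⟩ := φbij.2 (eG m z')
    have h1 : f x₀ = g (eG m z') := by
      rw [show f x₀ = g (φ x₀) from congrFun hφ x₀, hx₀]
    have hidx := card_eq x₀ (eG m z') h1
    rw [paramG] at hidx
    rcases hp : P.param x₀ with ⟨m₀, z₀, w₀⟩
    rw [hp] at hidx
    have hm : m₀ = m := hidx
    subst hm
    refine ⟨z₀, Ginj m₀ ?_⟩
    rw [θspec]
    have h2 : F m₀ z₀ = f x₀ := (key_f _ _).2 (by rw [paramF, hp])
    exact h2.trans h1
  have θmeas : ∀ m : Cplus, Measurable (θ m) := by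
    intro m
    have hFm : Measurable (F m) := hf.comp (eFmeas m)
    have hcomp : G m ∘ θ m = F m := funext fun z => θspec m z
    have h2 : Measurable (G m ∘ θ m) := by rw [hcomp]; exact hFm
    exact (Gemb m).measurable_comp_iff.1 h2
  -- the W-part isomorphisms
  have σex : ∀ m : Cplus, Nonempty (P.W m ≃ Q.W m) := fun m =>
    Cardinal.eq.1 ((P.cardW m).trans (Q.cardW m).symm)
  let σ : ∀ m : Cplus, P.W m ≃ᵐ Q.W m := fun m =>
    PolishSpace.Equiv.measurableEquiv (σex m).some
  -- the global map
  let Ψ : (Σ m : Cplus, P.Z m × P.W m) → Σ m : Cplus, Q.Z m × Q.W m :=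
    fun p => ⟨p.1, (θ p.1 p.2.1, σ p.1 p.2.2)⟩
  have Ψmeas : Measurable Ψ := by
    apply measurable_of_sigma
    intro m
    exact (measurable_sigma_mk' m).comp
      (((θmeas m).comp measurable_fst).prodMk ((σ m).measurable.comp measurable_snd))
  have Ψbij : Function.Bijective Ψ := by
    constructor
    · rintro ⟨m, a, b⟩ ⟨m', a', b'⟩ h
      have hm : m = m' := congrArg Sigma.fst h
      subst hm
      have h2 : (θ m a, (σ m) b) = (θ m a', (σ m) b') :=
        eq_of_heq (Sigma.mk.inj_iff.1 h).2
      obtain ⟨ha, hb⟩ := Prod.ext_iff.1 h2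
      rw [θinj m ha, (σ m).injective hb]
    · rintro ⟨m, a', b'⟩
      obtain ⟨a, ha⟩ := θsurj m a'
      refine ⟨⟨m, (a, (σ m).symm b')⟩, ?_⟩
      show (⟨m, (θ m a, σ m ((σ m).symm b'))⟩ : Σ m : Cplus, Q.Z m × Q.W m) = ⟨m, (a', b')⟩
      rw [ha, (σ m).apply_symm_apply]
  refine ⟨fun x => qe.symm (Ψ (P.param x)), ?_, ?_, ?_⟩
  · exact qe.symm.bijective.comp (Ψbij.comp P.bij)
  · exact qe_symm_meas.comp (Ψmeas.comp pmeas)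
  · funext x
    show f x = g (qe.symm (Ψ (P.param x)))
    have hq : Q.param (qe.symm (Ψ (P.param x))) = Ψ (P.param x) := qe_left _
    rw [fF x, gG (qe.symm (Ψ (P.param x))), hq]
    exact (θspec (P.param x).1 (P.param x).2.1).symm
end

section
/- Two Borel parametrized equivalence relations are Borel isomorphic if and only if they have the same fine shape: if E on X and F on Y are Borel parametrized, then there is a Borel bijection h : X → Y with x E x' ↔ h(x) F h(x') if and only if for every nonzero cardinal m ≤ 2^{ℵ₀}, the number of E-classes of cardinality m equals the number of F-classes of cardinality m. -/
instance Cplus.countable : Countable Cplus := by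
  have hsub : Cplus ⊆ Set.range ((↑) : ℕ → Cardinal) ∪ {Cardinal.aleph0, Cardinal.continuum} := by
    rintro m ⟨hm0, hm⟩
    rcases hm with hle | rfl
    · rcases lt_or_eq_of_le hle with hlt | rfl
      · obtain ⟨n, rfl⟩ := Cardinal.lt_aleph0.1 hlt
        exact Or.inl ⟨n, rfl⟩
      · exact Or.inr (Or.inl rfl)
    · exact Or.inr (Or.inr rfl)
  exact (((Set.countable_range _).union
    ((Set.countable_singleton _).insert _)).mono hsub).to_subtype

-- helpers for sigma equalities
lemma sigma_fst_eq {ι : Type*} {Z W : ι → Type*} (t s : Σ i, Z i × W i)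
    (h : (⟨t.1, t.2.1⟩ : Σ i, Z i) = ⟨s.1, s.2.1⟩) : ∃ w : W s.1, t = ⟨s.1, s.2.1, w⟩ := by
  rcases t with ⟨m, z, w⟩; rcases s with ⟨m', z', w'⟩
  dsimp at h ⊢
  obtain ⟨rfl, hz⟩ := Sigma.mk.inj_iff.1 h
  exact ⟨w, by rw [eq_of_heq hz]⟩

lemma sigma_map_eq_iff {ι : Type*} {A B : ι → Type*} (f : ∀ i, A i → B i)
    (hf : ∀ i, Function.Injective (f i)) (p q : Σ i, A i) :
    (⟨p.1, f p.1 p.2⟩ : Σ i, B i) = ⟨q.1, f q.1 q.2⟩ ↔ p = q := by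
  constructor
  · rcases p with ⟨i, a⟩; rcases q with ⟨j, b⟩
    dsimp
    intro h
    obtain ⟨rfl, h2⟩ := Sigma.mk.inj_iff.1 h
    rw [hf i (eq_of_heq h2)]
  · rintro rfl; rfl

def sigmaFiberEquiv' {ι : Type*} {Z : ι → Type*} (i : ι) : {p : Σ j, Z j // p.1 = i} ≃ Z i where
  toFun p := p.2 ▸ p.1.2
  invFun z := ⟨⟨i, z⟩, rfl⟩
  left_inv := by rintro ⟨⟨j, z⟩, rfl⟩; rfl
  right_inv z := rfl

namespace BorelParametrization

variable {X : Type} [MeasurableSpace X] {E : Setoid X} (P : BorelParametrization E)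

/-- The induced bijection between `E`-classes and `Σ m, Z m`. -/
noncomputable def classIndex : Quotient E ≃ Σ m : Cplus, P.Z m :=
  Equiv.ofBijective
    (Quotient.lift (fun x => (⟨(P.param x).1, (P.param x).2.1⟩ : Σ m : Cplus, P.Z m))
      (fun a b h => (P.eqv a b).1 h))
    ⟨by
      apply Quotient.ind₂
      intro a b h
      exact Quotient.sound ((P.eqv a b).2 h), by
      rintro ⟨m, z⟩
      have hw : Nonempty (P.W m) := Cardinal.mk_ne_zero_iff.1 (by rw [P.cardW m]; exact m.2.1)
      obtain ⟨w⟩ := hw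
      obtain ⟨x, hx⟩ := P.bij.2 ⟨m, z, w⟩
      exact ⟨Quotient.mk E x, by show (⟨(P.param x).1, (P.param x).2.1⟩ : Σ m : Cplus, P.Z m) = _; rw [hx]⟩⟩

lemma classIndex_mk (x : X) :
    P.classIndex (Quotient.mk E x) = ⟨(P.param x).1, (P.param x).2.1⟩ := rfl

/-- Each class has the cardinality given by its index. -/
lemma card_class (C : Quotient E) :
    Cardinal.mk {x : X // Quotient.mk E x = C} = ((P.classIndex C).1 : Cardinal) := by
  induction C using Quotient.ind with
  | _ x =>
  rw [P.classIndex_mk x]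
  rw [show (((⟨(P.param x).1, (P.param x).2.1⟩ : Σ m : Cplus, P.Z m)).1 : Cardinal)
    = ((P.param x).1 : Cardinal) from rfl]
  rw [← P.cardW (P.param x).1]
  have key : ∀ t : Σ m : Cplus, P.Z m × P.W m,
      P.param ((Equiv.ofBijective P.param P.bij).symm t) = t :=
    fun t => (Equiv.ofBijective P.param P.bij).apply_symm_apply t
  apply Cardinal.mk_congr
  apply Equiv.symm
  refine Equiv.ofBijective (fun w => ⟨(Equiv.ofBijective P.param P.bij).symm
    ⟨(P.param x).1, (P.param x).2.1, w⟩, ?_⟩) ⟨?_, ?_⟩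
  · exact Quotient.sound ((P.eqv _ _).2 (by rw [key]))
  · intro w w' hww
    have h := congrArg (fun p : {x' // Quotient.mk E x' = Quotient.mk E x} => P.param p.1) hww
    dsimp at h
    rw [key, key] at h
    exact congrArg Prod.snd (eq_of_heq (Sigma.mk.inj_iff.1 h).2)
  · rintro ⟨x', hx'⟩
    have hr : E.r x' x := Quotient.exact hx'
    obtain ⟨w, hw⟩ := sigma_fst_eq (P.param x') (P.param x) ((P.eqv x' x).1 hr)
    refine ⟨w, Subtype.ext ?_⟩
    dsimp
    apply P.bij.1
    rw [key, hw]

lemma count_eq (μ : Cplus) :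
    Cardinal.mk {C : Quotient E // Cardinal.mk {x : X // Quotient.mk E x = C} = (μ : Cardinal)}
      = Cardinal.mk (P.Z μ) := by
  apply Cardinal.mk_congr
  calc {C : Quotient E // Cardinal.mk {x : X // Quotient.mk E x = C} = (μ : Cardinal)}
      ≃ {C : Quotient E // ((P.classIndex C).1 : Cardinal) = (μ : Cardinal)} :=
        Equiv.subtypeEquivRight (fun C => by rw [P.card_class C])
    _ ≃ {t : Σ m : Cplus, P.Z m // ((t.1 : Cardinal)) = (μ : Cardinal)} :=
        P.classIndex.subtypeEquiv (fun C => Iff.rfl)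
    _ ≃ {t : Σ m : Cplus, P.Z m // t.1 = μ} :=
        Equiv.subtypeEquivRight (fun t => by
          constructor
          · intro h; exact Subtype.ext h
          · intro h; exact congrArg _ h)
    _ ≃ P.Z μ := sigmaFiberEquiv' μ

include P in
lemma count_zero {m : Cardinal} (hm : m ∉ Cplus) :
    Cardinal.mk {C : Quotient E // Cardinal.mk {x : X // Quotient.mk E x = C} = m} = 0 := by
  rw [Cardinal.mk_eq_zero_iff]
  constructor
  rintro ⟨C, hC⟩
  rw [P.card_class C] at hC
  exact hm (hC ▸ (P.classIndex C).1.2)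

end BorelParametrization

section SigmaMeasurable
variable {ι : Type*} {β : ι → Type*} [mβ : ∀ i, MeasurableSpace (β i)]

lemma my_measurable_sigmaMk (i : ι) : Measurable (@Sigma.mk ι β i) :=
  measurable_iff_le_map.2 (iInf_le _ i)

lemma my_measurable_of_sigma {γ : Type*} [MeasurableSpace γ] {f : (Σ i, β i) → γ}
    (h : ∀ i, Measurable (fun b => f ⟨i, b⟩)) : Measurable f := by
  intro s hs
  have : @MeasurableSet _ (⨅ i, MeasurableSpace.map (Sigma.mk i) (mβ i)) (f ⁻¹' s) :=
    MeasurableSpace.measurableSet_iInf.2 fun i => h i hs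
  exact this

end SigmaMeasurable

lemma my_sigma_standardBorel {ι : Type*} [Countable ι] (A : ι → Type*)
    [mA : ∀ i, MeasurableSpace (A i)] [∀ i, StandardBorelSpace (A i)] :
    StandardBorelSpace (Σ i, A i) := by
  letI := fun i => upgradeStandardBorel (A i)
  letI t : TopologicalSpace (Σ i, A i) := inferInstance
  haveI : PolishSpace (Σ i, A i) := inferInstance
  have key : (Sigma.instMeasurableSpace : MeasurableSpace (Σ i, A i)) = borel (Σ i, A i) := by
    apply le_antisymm
    · intro s hs
      letI : MeasurableSpace (Sigma A) := borel (Sigma A)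
      haveI : BorelSpace (Σ i, A i) := ⟨rfl⟩
      have hrep : s = ⋃ i, Sigma.mk i '' (Sigma.mk i ⁻¹' s) := by
        apply Set.Subset.antisymm
        · rintro ⟨i, a⟩ hp
          exact Set.mem_iUnion.2 ⟨i, a, hp, rfl⟩
        · rintro p hp
          obtain ⟨i, a, ha, rfl⟩ := Set.mem_iUnion.1 hp
          exact ha
      rw [hrep]
      refine MeasurableSet.iUnion fun i => ?_
      have he : MeasurableEmbedding (@Sigma.mk ι A i) :=
        Topology.IsOpenEmbedding.sigmaMk.measurableEmbedding
      exact he.measurableSet_image' (MeasurableSpace.measurableSet_iInf.1 hs i)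
    · apply MeasurableSpace.generateFrom_le
      intro s hs
      have : @MeasurableSet _ (⨅ i, MeasurableSpace.map (Sigma.mk i) (mA i)) s :=
        MeasurableSpace.measurableSet_iInf.2 fun i =>
          ((hs.preimage continuous_sigmaMk).measurableSet : MeasurableSet _)
      exact this
  haveI : BorelSpace (Σ i, A i) := ⟨key⟩
  infer_instance

/-- Two Borel parametrized equivalence relations are Borel isomorphic iff they have
the same fine shape: there is a Borel bijection `h : X → Y` with
`x E x' ↔ h x F h x'` if and only if for every nonzero cardinal `m ≤ 2^ℵ₀`, the
number of `E`-classes of cardinality `m` equals the number of `F`-classes of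
cardinality `m`. -/
theorem stmt17 {X Y : Type} [MeasurableSpace X] [StandardBorelSpace X]
    [MeasurableSpace Y] [StandardBorelSpace Y]
    (E : Setoid X) (F : Setoid Y)
    (hE : Nonempty (BorelParametrization E)) (hF : Nonempty (BorelParametrization F)) :
    (∃ h : X → Y, Function.Bijective h ∧ Measurable h ∧
        ∀ x x', E.r x x' ↔ F.r (h x) (h x')) ↔
      ∀ m : Cardinal, m ≠ 0 → m ≤ Cardinal.continuum →
        Cardinal.mk {C : Quotient E // Cardinal.mk {x : X // Quotient.mk E x = C} = m} =
          Cardinal.mk {D : Quotient F // Cardinal.mk {y : Y // Quotient.mk F y = D} = m} := by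
  obtain ⟨P⟩ := hE
  obtain ⟨Q⟩ := hF
  constructor
  · rintro ⟨h, hbij, -, hEF⟩ m hm0 hmc
    have gsound : ∀ a b, E.r a b → Quotient.mk F (h a) = Quotient.mk F (h b) :=
      fun a b hab => Quotient.sound ((hEF a b).1 hab)
    set g : Quotient E → Quotient F := Quotient.lift (fun x => Quotient.mk F (h x)) gsound
      with hg
    have gmk : ∀ x, g (Quotient.mk E x) = Quotient.mk F (h x) := fun x => rfl
    have ginj : Function.Injective g := by
      apply Quotient.ind₂
      intro a b hab
      exact Quotient.sound ((hEF a b).2 (Quotient.exact hab))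
    have gsurj : Function.Surjective g := by
      apply Quotient.ind
      intro y
      obtain ⟨x, rfl⟩ := hbij.2 y
      exact ⟨Quotient.mk E x, rfl⟩
    apply Cardinal.mk_congr
    refine (Equiv.ofBijective g ⟨ginj, gsurj⟩).subtypeEquiv fun C => ?_
    have hcc : Cardinal.mk {x : X // Quotient.mk E x = C}
        = Cardinal.mk {y : Y // Quotient.mk F y = g C} := by
      apply Cardinal.mk_congr
      refine (Equiv.ofBijective h hbij).subtypeEquiv fun x => ?_
      constructor
      · rintro rfl
        rfl
      · intro hy
        exact ginj (by rw [gmk]; exact hy)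
    show Cardinal.mk {x : X // Quotient.mk E x = C} = m ↔
      Cardinal.mk {y : Y // Quotient.mk F y = g C} = m
    rw [hcc]
  · intro hcard
    letI : ∀ m : Cplus, MeasurableSpace (P.Z m) := P.mZ
    letI : ∀ m : Cplus, MeasurableSpace (P.W m) := P.mW
    letI : ∀ m : Cplus, MeasurableSpace (Q.Z m) := Q.mZ
    letI : ∀ m : Cplus, MeasurableSpace (Q.W m) := Q.mW
    haveI : ∀ m : Cplus, StandardBorelSpace (P.Z m) := P.sbZ
    haveI : ∀ m : Cplus, StandardBorelSpace (P.W m) := P.sbW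
    haveI : ∀ m : Cplus, StandardBorelSpace (Q.Z m) := Q.sbZ
    haveI : ∀ m : Cplus, StandardBorelSpace (Q.W m) := Q.sbW
    have hZ : ∀ μ : Cplus, Nonempty (P.Z μ ≃ Q.Z μ) := fun μ => by
      apply Cardinal.eq.1
      rw [← P.count_eq μ, ← Q.count_eq μ]
      apply hcard μ.1 μ.2.1
      rcases μ.2.2 with hle | heq
      · exact hle.trans Cardinal.aleph0_le_continuum
      · exact le_of_eq heq
    have hW : ∀ μ : Cplus, Nonempty (P.W μ ≃ Q.W μ) := fun μ =>
      Cardinal.eq.1 (by rw [P.cardW μ, Q.cardW μ])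
    let ζ : ∀ μ : Cplus, P.Z μ ≃ᵐ Q.Z μ := fun μ =>
      PolishSpace.Equiv.measurableEquiv (Classical.choice (hZ μ))
    let ω : ∀ μ : Cplus, P.W μ ≃ᵐ Q.W μ := fun μ =>
      PolishSpace.Equiv.measurableEquiv (Classical.choice (hW μ))
    let σ : (Σ m : Cplus, P.Z m × P.W m) ≃ (Σ m : Cplus, Q.Z m × Q.W m) :=
      Equiv.sigmaCongrRight (fun μ => ((ζ μ).toEquiv.prodCongr (ω μ).toEquiv))
    let qF := Equiv.ofBijective Q.param Q.bij
    have hσ1 : ∀ t : Σ m : Cplus, P.Z m × P.W m, σ t = ⟨t.1, (ζ t.1 t.2.1, ω t.1 t.2.2)⟩ := by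
      rintro ⟨m, z, w⟩
      rfl
    refine ⟨fun x => qF.symm (σ (P.param x)), ?_, ?_, ?_⟩
    · exact (qF.symm.bijective.comp σ.bijective).comp P.bij
    · haveI sbP : StandardBorelSpace (Σ m : Cplus, P.Z m × P.W m) := my_sigma_standardBorel _
      haveI sbQ : StandardBorelSpace (Σ m : Cplus, Q.Z m × Q.W m) := my_sigma_standardBorel _
      have hσ : Measurable σ := my_measurable_of_sigma fun μ =>
        (my_measurable_sigmaMk μ).comp (((ζ μ).measurable.comp measurable_fst).prodMk
          ((ω μ).measurable.comp measurable_snd))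
      have hQmeas : Measurable Q.param := Q.meas
      have hQemb : MeasurableEmbedding Q.param := hQmeas.measurableEmbedding Q.bij.1
      have hqFsymm : Measurable (qF.symm : (Σ m : Cplus, Q.Z m × Q.W m) → Y) := by
        intro s hs
        have himg : qF.symm ⁻¹' s = Q.param '' s := by
          rw [← Equiv.image_eq_preimage_symm]
          rfl
        rw [himg]
        exact hQemb.measurableSet_image' hs
      have hPmeas : Measurable P.param := P.meas
      exact hqFsymm.comp (hσ.comp hPmeas)
    · intro x x'
      rw [P.eqv, Q.eqv]
      have hq1 : Q.param (qF.symm (σ (P.param x))) = σ (P.param x) := qF.apply_symm_apply _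
      have hq2 : Q.param (qF.symm (σ (P.param x'))) = σ (P.param x') := qF.apply_symm_apply _
      rw [hq1, hq2, hσ1, hσ1]
      exact (sigma_map_eq_iff (fun μ => ζ μ) (fun μ => (ζ μ).injective)
        ⟨(P.param x).1, (P.param x).2.1⟩ ⟨(P.param x').1, (P.param x').2.1⟩).symm
end
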